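/- Quantifier-removal lemma for type containment: Suppose α does not appear free in A and all types mentioned are well formed under the typing context Γ1,α,Γ2. (1) If every occurrence of β in A is negative, then Γ1,α,Γ2 ⊢ A[B/β] ⊑ A[(∀α.B)/β]. (2) If every occurrence of β in A is positive, then Γ1,α,Γ2 ⊢ A[(∀α.B)/β] ⊑ A[B/β]. -/

import Mathlib

set_option maxHeartbeats 1000000

namespace SigRes

/-! ## Types of λ_eff^ext -/

/-- Types: type variables, base types, function, universal, product, sum, list. -/
inductive Ty : Type where
  | var  : ℕ → Ty
  | base : ℕ → Ty
  | fn   : Ty → Ty → Ty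
  | all  : ℕ → Ty → Ty
  | prod : Ty → Ty → Ty
  | sum  : Ty → Ty → Ty
  | list : Ty → Ty

/-- Free type variables. -/
def ftv : Ty → Finset ℕ
  | Ty.var a    => {a}
  | Ty.base _   => ∅
  | Ty.fn A B   => ftv A ∪ ftv B
  | Ty.all a A  => ftv A \ {a}
  | Ty.prod A B => ftv A ∪ ftv B
  | Ty.sum A B  => ftv A ∪ ftv B
  | Ty.list A   => ftv A

/-- Simultaneous type substitution by a map (binders shadow). -/
def substMap : (ℕ → Ty) → Ty → Ty
  | σ, Ty.var a    => σ a
  | _, Ty.base i   => Ty.base i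
  | σ, Ty.fn A B   => Ty.fn (substMap σ A) (substMap σ B)
  | σ, Ty.all a A  => Ty.all a (substMap (Function.update σ a (Ty.var a)) A)
  | σ, Ty.prod A B => Ty.prod (substMap σ A) (substMap σ B)
  | σ, Ty.sum A B  => Ty.sum (substMap σ A) (substMap σ B)
  | σ, Ty.list A   => Ty.list (substMap σ A)

/-- `subst1 A b B` is `A[B/b]`. -/
def subst1 (A : Ty) (b : ℕ) (B : Ty) : Ty :=
  substMap (Function.update Ty.var b B) A

def lookupTy : List (ℕ × Ty) → ℕ → Option Ty
  | [], _ => none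
  | (a, B) :: rest, b => if a = b then some B else lookupTy rest b

/-- Simultaneous substitution `A[Bs/as]`. -/
def msubst (A : Ty) (as : List ℕ) (Bs : List Ty) : Ty :=
  substMap (fun b => (lookupTy (as.zip Bs) b).getD (Ty.var b)) A

/-- `∀ a1. … ∀ an. A`. -/
def Ty.alls : List ℕ → Ty → Ty
  | [], A => A
  | a :: as, A => Ty.all a (Ty.alls as A)

/-! ## Polarity of occurrences of a type variable -/

mutual
/-- Every occurrence of `b` in the type is positive. -/
def posOnly (b : ℕ) : Ty → Prop
  | Ty.var _    => True
  | Ty.base _   => True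
  | Ty.fn A B   => negOnly b A ∧ posOnly b B
  | Ty.all a A  => a = b ∨ posOnly b A
  | Ty.prod A B => posOnly b A ∧ posOnly b B
  | Ty.sum A B  => posOnly b A ∧ posOnly b B
  | Ty.list A   => posOnly b A

/-- Every occurrence of `b` in the type is negative. -/
def negOnly (b : ℕ) : Ty → Prop
  | Ty.var a    => a ≠ b
  | Ty.base _   => True
  | Ty.fn A B   => posOnly b A ∧ negOnly b B
  | Ty.all a A  => a = b ∨ negOnly b A
  | Ty.prod A B => negOnly b A ∧ negOnly b B
  | Ty.sum A B  => negOnly b A ∧ negOnly b B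
  | Ty.list A   => negOnly b A
end

/-- Every occurrence of `b` in the type is negative or strictly positive. -/
def negOrSPos (b : ℕ) : Ty → Prop
  | Ty.var _    => True
  | Ty.base _   => True
  | Ty.fn A B   => posOnly b A ∧ negOrSPos b B
  | Ty.all a A  => a = b ∨ negOrSPos b A
  | Ty.prod A B => negOrSPos b A ∧ negOrSPos b B
  | Ty.sum A B  => negOrSPos b A ∧ negOrSPos b B
  | Ty.list A   => negOrSPos b A

/-! ## Typing contexts -/

inductive Binding : Type where
  | tmVar : ℕ → Ty → Binding
  | tyVar : ℕ → Binding

/-- Typing contexts; the most recently added binding is at the head. -/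
abbrev Ctx := List Binding

def tmDom : Ctx → Finset ℕ
  | [] => ∅
  | Binding.tmVar x _ :: Γ => insert x (tmDom Γ)
  | Binding.tyVar _ :: Γ => tmDom Γ

def tyDom : Ctx → Finset ℕ
  | [] => ∅
  | Binding.tmVar _ _ :: Γ => tyDom Γ
  | Binding.tyVar a :: Γ => insert a (tyDom Γ)

def domAll (Γ : Ctx) : Finset ℕ := tmDom Γ ∪ tyDom Γ

/-- Well-formed typing contexts: pairwise-distinct bound (type) variables, and
    all bound types well formed under the preceding bindings. -/
inductive WfCtx : Ctx → Prop where
  | nil : WfCtx []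
  | tm {Γ : Ctx} {x : ℕ} {A : Ty} :
      WfCtx Γ → x ∉ tmDom Γ → ftv A ⊆ tyDom Γ → WfCtx (Binding.tmVar x A :: Γ)
  | ty {Γ : Ctx} {a : ℕ} :
      WfCtx Γ → a ∉ tyDom Γ → WfCtx (Binding.tyVar a :: Γ)

/-- `Γ ⊢ A` : the type `A` is well formed under `Γ`. -/
def WfTy (Γ : Ctx) (A : Ty) : Prop := WfCtx Γ ∧ ftv A ⊆ tyDom Γ

/-- `Γ, a1, …, an` (type-variable extension). -/
def extendTys (Γ : Ctx) (as : List ℕ) : Ctx := (as.map Binding.tyVar).reverse ++ Γ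

/-- A context consisting only of type-variable bindings. -/
def TyVarOnly (Γ : Ctx) : Prop := ∀ b ∈ Γ, ∃ a, b = Binding.tyVar a

/-! ## Type containment -/

inductive TySub : Ctx → Ty → Ty → Prop where
  | refl {Γ A} : WfCtx Γ → ftv A ⊆ tyDom Γ → TySub Γ A A
  | trans {Γ A B C} : TySub Γ A B → TySub Γ B C → TySub Γ A C
  | inst {Γ a A B} : WfCtx Γ → ftv B ⊆ tyDom Γ →
      TySub Γ (Ty.all a A) (subst1 A a B)
  | gen {Γ a A} : a ∉ ftv A → TySub Γ A (Ty.all a A)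
  | poly {Γ a A B} : TySub (Binding.tyVar a :: Γ) A B →
      TySub Γ (Ty.all a A) (Ty.all a B)
  | fn {Γ A1 A2 B1 B2} : TySub Γ B1 A1 → TySub Γ A2 B2 →
      TySub Γ (Ty.fn A1 A2) (Ty.fn B1 B2)
  | prod {Γ A1 A2 B1 B2} : TySub Γ A1 B1 → TySub Γ A2 B2 →
      TySub Γ (Ty.prod A1 A2) (Ty.prod B1 B2)
  | sum {Γ A1 A2 B1 B2} : TySub Γ A1 B1 → TySub Γ A2 B2 →
      TySub Γ (Ty.sum A1 A2) (Ty.sum B1 B2)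
  | list {Γ A B} : TySub Γ A B → TySub Γ (Ty.list A) (Ty.list B)
  | dfun {Γ a A B} : a ∉ ftv A →
      TySub Γ (Ty.all a (Ty.fn A B)) (Ty.fn A (Ty.all a B))
  | dprod {Γ a A B} :
      TySub Γ (Ty.all a (Ty.prod A B)) (Ty.prod (Ty.all a A) (Ty.all a B))
  | dsum {Γ a A B} :
      TySub Γ (Ty.all a (Ty.sum A B)) (Ty.sum (Ty.all a A) (Ty.all a B))
  | dlist {Γ a A} :
      TySub Γ (Ty.all a (Ty.list A)) (Ty.list (Ty.all a A))

/-! ## Operation signatures -/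

/-- `ty(op) = ∀ tvars. dom ↪ cod`, a closed type signature. -/
structure OpSig : Type where
  tvars : List ℕ
  nodup : tvars.Nodup
  dom : Ty
  cod : Ty
  closed_dom : ftv dom ⊆ tvars.toFinset
  closed_cod : ftv cod ⊆ tvars.toFinset

/-- The signature restriction. -/
def OpSig.SR (s : OpSig) : Prop :=
  (∀ a ∈ s.tvars, negOrSPos a s.dom) ∧ (∀ a ∈ s.tvars, posOnly a s.cod)

/-! ## Terms and handlers -/

mutual
inductive Term : Type where
  | var : ℕ → Term
  | const : ℕ → Term
  | lam : ℕ → Term → Term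
  | app : Term → Term → Term
  | op : ℕ → Term → Term
  | handle : Term → Handler → Term
  | pair : Term → Term → Term
  | proj1 : Term → Term
  | proj2 : Term → Term
  | inl : Term → Term
  | inr : Term → Term
  | scase : Term → ℕ → Term → ℕ → Term → Term
  | nil : Term
  | cons : Term → Term
  | lcase : Term → Term → ℕ → Term → Term
  | fix : ℕ → ℕ → Term → Term

inductive Handler : Type where
  | ret : ℕ → Term → Handler
  | opClause : Handler → ℕ → ℕ → ℕ → Term → Handler
end

/-- The return clause of a handler. -/
def Handler.retClause : Handler → ℕ × Term
  | Handler.ret x M => (x, M)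
  | Handler.opClause H _ _ _ _ => H.retClause

/-- The operation clause of a handler for a given operation (if any). -/
def Handler.lookup : Handler → ℕ → Option (ℕ × ℕ × Term)
  | Handler.ret _ _, _ => none
  | Handler.opClause H o' x k M, o => if o' = o then some (x, k, M) else H.lookup o

mutual
/-- Term substitution `M[N/x]` (binders shadow). -/
def Term.subst : Term → ℕ → Term → Term
  | Term.var y, x, N => if y = x then N else Term.var y
  | Term.const c, _, _ => Term.const c
  | Term.lam y M, x, N => if y = x then Term.lam y M else Term.lam y (M.subst x N)
  | Term.app M1 M2, x, N => Term.app (M1.subst x N) (M2.subst x N)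
  | Term.op o M, x, N => Term.op o (M.subst x N)
  | Term.handle M H, x, N => Term.handle (M.subst x N) (H.subst x N)
  | Term.pair M1 M2, x, N => Term.pair (M1.subst x N) (M2.subst x N)
  | Term.proj1 M, x, N => Term.proj1 (M.subst x N)
  | Term.proj2 M, x, N => Term.proj2 (M.subst x N)
  | Term.inl M, x, N => Term.inl (M.subst x N)
  | Term.inr M, x, N => Term.inr (M.subst x N)
  | Term.scase M y M1 z M2, x, N =>
      Term.scase (M.subst x N) y (if y = x then M1 else M1.subst x N)
        z (if z = x then M2 else M2.subst x N)
  | Term.nil, _, _ => Term.nil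
  | Term.cons M, x, N => Term.cons (M.subst x N)
  | Term.lcase M M1 y M2, x, N =>
      Term.lcase (M.subst x N) (M1.subst x N) y (if y = x then M2 else M2.subst x N)
  | Term.fix f y M, x, N =>
      if f = x ∨ y = x then Term.fix f y M else Term.fix f y (M.subst x N)

def Handler.subst : Handler → ℕ → Term → Handler
  | Handler.ret y M, x, N => Handler.ret y (if y = x then M else M.subst x N)
  | Handler.opClause H o y k M, x, N =>
      Handler.opClause (H.subst x N) o y k (if y = x ∨ k = x then M else M.subst x N)
end

/-- Values. -/
inductive IsValue : Term → Prop where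
  | const {c} : IsValue (Term.const c)
  | lam {x M} : IsValue (Term.lam x M)
  | pair {v1 v2} : IsValue v1 → IsValue v2 → IsValue (Term.pair v1 v2)
  | inl {v} : IsValue v → IsValue (Term.inl v)
  | inr {v} : IsValue v → IsValue (Term.inr v)
  | nil : IsValue Term.nil
  | cons {v} : IsValue v → IsValue (Term.cons v)

mutual
/-- Free term variables of a term. -/
def fvTerm : Term → Finset ℕ
  | Term.var x => {x}
  | Term.const _ => ∅
  | Term.lam x M => fvTerm M \ {x}
  | Term.app M1 M2 => fvTerm M1 ∪ fvTerm M2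
  | Term.op _ M => fvTerm M
  | Term.handle M H => fvTerm M ∪ fvHandler H
  | Term.pair M1 M2 => fvTerm M1 ∪ fvTerm M2
  | Term.proj1 M => fvTerm M
  | Term.proj2 M => fvTerm M
  | Term.inl M => fvTerm M
  | Term.inr M => fvTerm M
  | Term.scase M y M1 z M2 => fvTerm M ∪ (fvTerm M1 \ {y}) ∪ (fvTerm M2 \ {z})
  | Term.nil => ∅
  | Term.cons M => fvTerm M
  | Term.lcase M M1 y M2 => fvTerm M ∪ fvTerm M1 ∪ (fvTerm M2 \ {y})
  | Term.fix f y M => fvTerm M \ {f, y}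

def fvHandler : Handler → Finset ℕ
  | Handler.ret x M => fvTerm M \ {x}
  | Handler.opClause H _ x k M => fvHandler H ∪ (fvTerm M \ {x, k})
end

/-! ## Evaluation contexts -/

inductive ECtx : Type where
  | hole : ECtx
  | appL : ECtx → Term → ECtx
  | appR : (v : Term) → IsValue v → ECtx → ECtx
  | op : ℕ → ECtx → ECtx
  | handle : ECtx → Handler → ECtx
  | pairL : ECtx → Term → ECtx
  | pairR : (v : Term) → IsValue v → ECtx → ECtx
  | proj1 : ECtx → ECtx
  | proj2 : ECtx → ECtx
  | inl : ECtx → ECtx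
  | inr : ECtx → ECtx
  | scase : ECtx → ℕ → Term → ℕ → Term → ECtx
  | cons : ECtx → ECtx
  | lcase : ECtx → Term → ℕ → Term → ECtx

/-- `plug E M` is `E[M]`. -/
def plug : ECtx → Term → Term
  | ECtx.hole, M => M
  | ECtx.appL E M2, M => Term.app (plug E M) M2
  | ECtx.appR v _ E, M => Term.app v (plug E M)
  | ECtx.op o E, M => Term.op o (plug E M)
  | ECtx.handle E H, M => Term.handle (plug E M) H
  | ECtx.pairL E M2, M => Term.pair (plug E M) M2
  | ECtx.pairR v _ E, M => Term.pair v (plug E M)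
  | ECtx.proj1 E, M => Term.proj1 (plug E M)
  | ECtx.proj2 E, M => Term.proj2 (plug E M)
  | ECtx.inl E, M => Term.inl (plug E M)
  | ECtx.inr E, M => Term.inr (plug E M)
  | ECtx.scase E y M1 z M2, M => Term.scase (plug E M) y M1 z M2
  | ECtx.cons E, M => Term.cons (plug E M)
  | ECtx.lcase E M1 y M2, M => Term.lcase (plug E M) M1 y M2

/-- `op ∉ E` : the evaluation context is op-free. -/
def opFree (o : ℕ) : ECtx → Prop
  | ECtx.hole => True
  | ECtx.appL E _ => opFree o E
  | ECtx.appR _ _ E => opFree o E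
  | ECtx.op _ E => opFree o E
  | ECtx.handle E H => H.lookup o = none ∧ opFree o E
  | ECtx.pairL E _ => opFree o E
  | ECtx.pairR _ _ E => opFree o E
  | ECtx.proj1 E => opFree o E
  | ECtx.proj2 E => opFree o E
  | ECtx.inl E => opFree o E
  | ECtx.inr E => opFree o E
  | ECtx.scase E _ _ _ _ => opFree o E
  | ECtx.cons E => opFree o E
  | ECtx.lcase E _ _ _ => opFree o E

/-- Free term variables of an evaluation context. -/
def fvECtx : ECtx → Finset ℕ
  | ECtx.hole => ∅
  | ECtx.appL E M => fvECtx E ∪ fvTerm M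
  | ECtx.appR v _ E => fvTerm v ∪ fvECtx E
  | ECtx.op _ E => fvECtx E
  | ECtx.handle E H => fvECtx E ∪ fvHandler H
  | ECtx.pairL E M => fvECtx E ∪ fvTerm M
  | ECtx.pairR v _ E => fvTerm v ∪ fvECtx E
  | ECtx.proj1 E => fvECtx E
  | ECtx.proj2 E => fvECtx E
  | ECtx.inl E => fvECtx E
  | ECtx.inr E => fvECtx E
  | ECtx.scase E y M1 z M2 => fvECtx E ∪ (fvTerm M1 \ {y}) ∪ (fvTerm M2 \ {z})
  | ECtx.cons E => fvECtx E
  | ECtx.lcase E M1 y M2 => fvECtx E ∪ fvTerm M1 ∪ (fvTerm M2 \ {y})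

/-! ## Semantics -/

/-- Reduction `M1 ⤳ M2`, parameterized by the denotation `ζ` of constants. -/
inductive Reduce (zeta : ℕ → ℕ → Option ℕ) : Term → Term → Prop where
  | const {c1 c2 c} : zeta c1 c2 = some c →
      Reduce zeta (Term.app (Term.const c1) (Term.const c2)) (Term.const c)
  | beta {x M v} : IsValue v →
      Reduce zeta (Term.app (Term.lam x M) v) (M.subst x v)
  | ret {v H x M} : IsValue v → H.retClause = (x, M) →
      Reduce zeta (Term.handle v H) (M.subst x v)
  | handle {E o v H x k M y} : IsValue v → opFree o E →
      H.lookup o = some (x, k, M) →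
      y ∉ fvECtx E ∪ fvHandler H →
      Reduce zeta (Term.handle (plug E (Term.op o v)) H)
        ((M.subst x v).subst k (Term.lam y (Term.handle (plug E (Term.var y)) H)))
  | proj1 {v1 v2} : IsValue v1 → IsValue v2 →
      Reduce zeta (Term.proj1 (Term.pair v1 v2)) v1
  | proj2 {v1 v2} : IsValue v1 → IsValue v2 →
      Reduce zeta (Term.proj2 (Term.pair v1 v2)) v2
  | caseL {v y M1 z M2} : IsValue v →
      Reduce zeta (Term.scase (Term.inl v) y M1 z M2) (M1.subst y v)
  | caseR {v y M1 z M2} : IsValue v →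
      Reduce zeta (Term.scase (Term.inr v) y M1 z M2) (M2.subst z v)
  | lnil {M1 y M2} : Reduce zeta (Term.lcase Term.nil M1 y M2) M1
  | lcons {v M1 y M2} : IsValue v →
      Reduce zeta (Term.lcase (Term.cons v) M1 y M2) (M2.subst y v)
  | fix {f x M} :
      Reduce zeta (Term.fix f x M) ((Term.lam x M).subst f (Term.fix f x M))

/-- Evaluation `M1 ⟶ M2`. -/
def Step (zeta : ℕ → ℕ → Option ℕ) (M1 M2 : Term) : Prop :=
  ∃ E M1' M2', M1 = plug E M1' ∧ M2 = plug E M2' ∧ Reduce zeta M1' M2'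

/-- Multi-step evaluation `M1 ⟶* M2`. -/
def Steps (zeta : ℕ → ℕ → Option ℕ) : Term → Term → Prop :=
  Relation.ReflTransGen (Step zeta)

/-! ## Constants -/

/-- First-order types `ι1 → … → ιn → ι(n+1)`. -/
inductive FirstOrder : Ty → Prop where
  | base {i} : FirstOrder (Ty.base i)
  | fn {i A} : FirstOrder A → FirstOrder (Ty.fn (Ty.base i) A)

/-- Standing assumptions on the types of constants and the denotation `ζ`. -/
structure ConstAssum (tyc : ℕ → Ty) (zeta : ℕ → ℕ → Option ℕ) : Prop where
  firstOrder : ∀ c, FirstOrder (tyc c)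
  zeta_defined : ∀ c1 c2, (zeta c1 c2).isSome ↔
      ∃ i A, tyc c1 = Ty.fn (Ty.base i) A ∧ tyc c2 = Ty.base i
  zeta_ty : ∀ c1 c2 c i A, zeta c1 c2 = some c →
      tyc c1 = Ty.fn (Ty.base i) A → tyc c = A

/-! ## The polymorphic type system -/

mutual
inductive Typing (opty : ℕ → OpSig) (tyc : ℕ → Ty) : Ctx → Term → Ty → Prop where
  | var {Γ x A} : WfCtx Γ → Binding.tmVar x A ∈ Γ →
      Typing opty tyc Γ (Term.var x) A
  | const {Γ c} : WfCtx Γ → Typing opty tyc Γ (Term.const c) (tyc c)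
  | abs {Γ x A M B} : Typing opty tyc (Binding.tmVar x A :: Γ) M B →
      Typing opty tyc Γ (Term.lam x M) (Ty.fn A B)
  | app {Γ M1 M2 A B} : Typing opty tyc Γ M1 (Ty.fn A B) →
      Typing opty tyc Γ M2 A → Typing opty tyc Γ (Term.app M1 M2) B
  | gen {Γ a M A} : Typing opty tyc (Binding.tyVar a :: Γ) M A →
      Typing opty tyc Γ M (Ty.all a A)
  | inst {Γ M A B} : Typing opty tyc Γ M A → TySub Γ A B → WfCtx Γ →
      ftv B ⊆ tyDom Γ → Typing opty tyc Γ M B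
  | op {Γ o M Cs} : WfCtx Γ → Cs.length = (opty o).tvars.length →
      (∀ C ∈ Cs, ftv C ⊆ tyDom Γ) →
      Typing opty tyc Γ M (msubst (opty o).dom (opty o).tvars Cs) →
      Typing opty tyc Γ (Term.op o M) (msubst (opty o).cod (opty o).tvars Cs)
  | handle {Γ M H A B} : Typing opty tyc Γ M A → HTyping opty tyc Γ H A B →
      Typing opty tyc Γ (Term.handle M H) B
  | pair {Γ M1 M2 A B} : Typing opty tyc Γ M1 A → Typing opty tyc Γ M2 B →
      Typing opty tyc Γ (Term.pair M1 M2) (Ty.prod A B)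
  | proj1 {Γ M A B} : Typing opty tyc Γ M (Ty.prod A B) →
      Typing opty tyc Γ (Term.proj1 M) A
  | proj2 {Γ M A B} : Typing opty tyc Γ M (Ty.prod A B) →
      Typing opty tyc Γ (Term.proj2 M) B
  | inl {Γ M A B} : Typing opty tyc Γ M A → ftv B ⊆ tyDom Γ →
      Typing opty tyc Γ (Term.inl M) (Ty.sum A B)
  | inr {Γ M A B} : Typing opty tyc Γ M B → ftv A ⊆ tyDom Γ →
      Typing opty tyc Γ (Term.inr M) (Ty.sum A B)
  | scase {Γ M x M1 y M2 A B C} : Typing opty tyc Γ M (Ty.sum A B) →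
      Typing opty tyc (Binding.tmVar x A :: Γ) M1 C →
      Typing opty tyc (Binding.tmVar y B :: Γ) M2 C →
      Typing opty tyc Γ (Term.scase M x M1 y M2) C
  | nil {Γ A} : WfCtx Γ → ftv A ⊆ tyDom Γ →
      Typing opty tyc Γ Term.nil (Ty.list A)
  | cons {Γ M A} : Typing opty tyc Γ M (Ty.prod A (Ty.list A)) →
      Typing opty tyc Γ (Term.cons M) (Ty.list A)
  | lcase {Γ M M1 x M2 A B} : Typing opty tyc Γ M (Ty.list A) →
      Typing opty tyc Γ M1 B →
      Typing opty tyc (Binding.tmVar x (Ty.prod A (Ty.list A)) :: Γ) M2 B →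
      Typing opty tyc Γ (Term.lcase M M1 x M2) B
  | fix {Γ f x M A B} :
      Typing opty tyc (Binding.tmVar x A :: Binding.tmVar f (Ty.fn A B) :: Γ) M B →
      Typing opty tyc Γ (Term.fix f x M) (Ty.fn A B)

inductive HTyping (opty : ℕ → OpSig) (tyc : ℕ → Ty) : Ctx → Handler → Ty → Ty → Prop where
  | ret {Γ x M A B} : Typing opty tyc (Binding.tmVar x A :: Γ) M B →
      HTyping opty tyc Γ (Handler.ret x M) A B
  | op {Γ H o x k M A B} : HTyping opty tyc Γ H A B →
      Typing opty tyc
        (Binding.tmVar k (Ty.fn (opty o).cod B) ::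
          Binding.tmVar x (opty o).dom :: extendTys Γ (opty o).tvars) M B →
      HTyping opty tyc Γ (Handler.opClause H o x k M) A B
end

/-- `unqualify` removes all outermost universal quantifiers. -/
def unqualify : Ty → Ty
  | Ty.all _ A => unqualify A
  | A => A

/-- Substitution in all types bound in a context. -/
def ctxSubst (Γ : Ctx) (a : ℕ) (A : Ty) : Ctx :=
  Γ.map fun b => match b with
    | Binding.tmVar x B => Binding.tmVar x (subst1 B a A)
    | Binding.tyVar c => Binding.tyVar c

/-! ### Auxiliary machinery for the quantifier-removal lemma -/

/-- Binder variables of a type. -/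
def bndv : Ty → Finset ℕ
  | Ty.var _    => ∅
  | Ty.base _   => ∅
  | Ty.fn A B   => bndv A ∪ bndv B
  | Ty.all a A  => insert a (bndv A)
  | Ty.prod A B => bndv A ∪ bndv B
  | Ty.sum A B  => bndv A ∪ bndv B
  | Ty.list A   => bndv A

/-- Size of a type. -/
def tsize : Ty → ℕ
  | Ty.var _    => 1
  | Ty.base _   => 1
  | Ty.fn A B   => tsize A + tsize B + 1
  | Ty.all _ A  => tsize A + 1
  | Ty.prod A B => tsize A + tsize B + 1
  | Ty.sum A B  => tsize A + tsize B + 1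
  | Ty.list A   => tsize A + 1

lemma substMap_congr : ∀ (A : Ty) (σ σ' : ℕ → Ty), (∀ x ∈ ftv A, σ x = σ' x) →
    substMap σ A = substMap σ' A := by
  intro A
  induction A with
  | var x => intro σ σ' h; exact h x (by simp [ftv])
  | base i => intro _ _ _; rfl
  | fn A B ihA ihB =>
      intro σ σ' h
      simp only [substMap]
      rw [ihA σ σ' fun x hx => h x (by simp only [ftv, Finset.mem_union]; exact Or.inl hx),
          ihB σ σ' fun x hx => h x (by simp only [ftv, Finset.mem_union]; exact Or.inr hx)]
  | all a A ih =>
      intro σ σ' h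
      simp only [substMap]
      rw [ih _ _ ?_]
      intro x hx
      by_cases hxa : x = a
      · subst hxa; simp
      · rw [Function.update_of_ne hxa, Function.update_of_ne hxa]
        exact h x (by simp only [ftv, Finset.mem_sdiff, Finset.mem_singleton]; exact ⟨hx, hxa⟩)
  | prod A B ihA ihB =>
      intro σ σ' h
      simp only [substMap]
      rw [ihA σ σ' fun x hx => h x (by simp only [ftv, Finset.mem_union]; exact Or.inl hx),
          ihB σ σ' fun x hx => h x (by simp only [ftv, Finset.mem_union]; exact Or.inr hx)]
  | sum A B ihA ihB =>
      intro σ σ' h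
      simp only [substMap]
      rw [ihA σ σ' fun x hx => h x (by simp only [ftv, Finset.mem_union]; exact Or.inl hx),
          ihB σ σ' fun x hx => h x (by simp only [ftv, Finset.mem_union]; exact Or.inr hx)]
  | list A ihA =>
      intro σ σ' h
      simp only [substMap]
      rw [ihA σ σ' fun x hx => h x (by simpa [ftv] using hx)]

lemma substMap_id : ∀ A : Ty, substMap Ty.var A = A := by
  intro A
  induction A with
  | var x => rfl
  | base i => rfl
  | fn A B ihA ihB => simp only [substMap]; rw [ihA, ihB]
  | all a A ih =>
      simp only [substMap]
      rw [show Function.update Ty.var a (Ty.var a) = Ty.var from Function.update_eq_self a Ty.var, ih]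
  | prod A B ihA ihB => simp only [substMap]; rw [ihA, ihB]
  | sum A B ihA ihB => simp only [substMap]; rw [ihA, ihB]
  | list A ihA => simp only [substMap]; rw [ihA]

lemma ftv_substMap : ∀ (A : Ty) (σ : ℕ → Ty),
    ftv (substMap σ A) ⊆ (ftv A).biUnion (fun x => ftv (σ x)) := by
  intro A
  induction A with
  | var x => intro σ v hv; simp only [ftv, Finset.mem_biUnion, Finset.mem_singleton]
             exact ⟨x, rfl, hv⟩
  | base i => intro σ v hv; simp [substMap, ftv] at hv
  | fn A B ihA ihB =>
      intro σ v hv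
      simp only [substMap, ftv, Finset.mem_union] at hv
      rcases hv with hv | hv
      · rcases Finset.mem_biUnion.1 (ihA σ hv) with ⟨x, hx, hvx⟩
        exact Finset.mem_biUnion.2 ⟨x, by simp only [ftv, Finset.mem_union]; exact Or.inl hx, hvx⟩
      · rcases Finset.mem_biUnion.1 (ihB σ hv) with ⟨x, hx, hvx⟩
        exact Finset.mem_biUnion.2 ⟨x, by simp only [ftv, Finset.mem_union]; exact Or.inr hx, hvx⟩
  | all a A ih =>
      intro σ v hv
      simp only [substMap, ftv, Finset.mem_sdiff, Finset.mem_singleton] at hv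
      obtain ⟨hv, hva⟩ := hv
      rcases Finset.mem_biUnion.1 (ih _ hv) with ⟨x, hx, hvx⟩
      by_cases hxa : x = a
      · subst hxa; rw [Function.update_self] at hvx
        simp only [ftv, Finset.mem_singleton] at hvx; exact absurd hvx hva
      · rw [Function.update_of_ne hxa] at hvx
        exact Finset.mem_biUnion.2 ⟨x, by
          simp only [ftv, Finset.mem_sdiff, Finset.mem_singleton]; exact ⟨hx, hxa⟩, hvx⟩
  | prod A B ihA ihB =>
      intro σ v hv
      simp only [substMap, ftv, Finset.mem_union] at hv
      rcases hv with hv | hv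
      · rcases Finset.mem_biUnion.1 (ihA σ hv) with ⟨x, hx, hvx⟩
        exact Finset.mem_biUnion.2 ⟨x, by simp only [ftv, Finset.mem_union]; exact Or.inl hx, hvx⟩
      · rcases Finset.mem_biUnion.1 (ihB σ hv) with ⟨x, hx, hvx⟩
        exact Finset.mem_biUnion.2 ⟨x, by simp only [ftv, Finset.mem_union]; exact Or.inr hx, hvx⟩
  | sum A B ihA ihB =>
      intro σ v hv
      simp only [substMap, ftv, Finset.mem_union] at hv
      rcases hv with hv | hv
      · rcases Finset.mem_biUnion.1 (ihA σ hv) with ⟨x, hx, hvx⟩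
        exact Finset.mem_biUnion.2 ⟨x, by simp only [ftv, Finset.mem_union]; exact Or.inl hx, hvx⟩
      · rcases Finset.mem_biUnion.1 (ihB σ hv) with ⟨x, hx, hvx⟩
        exact Finset.mem_biUnion.2 ⟨x, by simp only [ftv, Finset.mem_union]; exact Or.inr hx, hvx⟩
  | list A ihA =>
      intro σ v hv
      simp only [substMap, ftv] at hv ⊢
      exact ihA σ hv

lemma bndv_substMap : ∀ (A : Ty) (σ : ℕ → Ty),
    bndv (substMap σ A) ⊆ bndv A ∪ (ftv A).biUnion (fun x => bndv (σ x)) := by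
  intro A
  induction A with
  | var x => intro σ v hv
             simp only [bndv, ftv, Finset.mem_union, Finset.mem_biUnion, Finset.mem_singleton]
             exact Or.inr ⟨x, rfl, hv⟩
  | base i => intro σ v hv; simp [substMap, bndv] at hv
  | fn A B ihA ihB =>
      intro σ v hv
      simp only [substMap, bndv, Finset.mem_union] at hv
      simp only [bndv, ftv, Finset.mem_union, Finset.mem_biUnion]
      rcases hv with hv | hv
      · rcases Finset.mem_union.1 (ihA σ hv) with h | h
        · exact Or.inl (Or.inl h)
        · rcases Finset.mem_biUnion.1 h with ⟨x, hx, hvx⟩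
          exact Or.inr ⟨x, Or.inl hx, hvx⟩
      · rcases Finset.mem_union.1 (ihB σ hv) with h | h
        · exact Or.inl (Or.inr h)
        · rcases Finset.mem_biUnion.1 h with ⟨x, hx, hvx⟩
          exact Or.inr ⟨x, Or.inr hx, hvx⟩
  | all a A ih =>
      intro σ v hv
      simp only [substMap, bndv, Finset.mem_insert] at hv
      simp only [bndv, ftv, Finset.mem_union, Finset.mem_insert, Finset.mem_biUnion,
        Finset.mem_sdiff, Finset.mem_singleton]
      rcases hv with rfl | hv
      · exact Or.inl (Or.inl rfl)
      · rcases Finset.mem_union.1 (ih _ hv) with h | h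
        · exact Or.inl (Or.inr h)
        · rcases Finset.mem_biUnion.1 h with ⟨x, hx, hvx⟩
          by_cases hxa : x = a
          · subst hxa; rw [Function.update_self] at hvx; simp [bndv] at hvx
          · rw [Function.update_of_ne hxa] at hvx
            exact Or.inr ⟨x, ⟨hx, hxa⟩, hvx⟩
  | prod A B ihA ihB =>
      intro σ v hv
      simp only [substMap, bndv, Finset.mem_union] at hv
      simp only [bndv, ftv, Finset.mem_union, Finset.mem_biUnion]
      rcases hv with hv | hv
      · rcases Finset.mem_union.1 (ihA σ hv) with h | h
        · exact Or.inl (Or.inl h)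
        · rcases Finset.mem_biUnion.1 h with ⟨x, hx, hvx⟩
          exact Or.inr ⟨x, Or.inl hx, hvx⟩
      · rcases Finset.mem_union.1 (ihB σ hv) with h | h
        · exact Or.inl (Or.inr h)
        · rcases Finset.mem_biUnion.1 h with ⟨x, hx, hvx⟩
          exact Or.inr ⟨x, Or.inr hx, hvx⟩
  | sum A B ihA ihB =>
      intro σ v hv
      simp only [substMap, bndv, Finset.mem_union] at hv
      simp only [bndv, ftv, Finset.mem_union, Finset.mem_biUnion]
      rcases hv with hv | hv
      · rcases Finset.mem_union.1 (ihA σ hv) with h | h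
        · exact Or.inl (Or.inl h)
        · rcases Finset.mem_biUnion.1 h with ⟨x, hx, hvx⟩
          exact Or.inr ⟨x, Or.inl hx, hvx⟩
      · rcases Finset.mem_union.1 (ihB σ hv) with h | h
        · exact Or.inl (Or.inr h)
        · rcases Finset.mem_biUnion.1 h with ⟨x, hx, hvx⟩
          exact Or.inr ⟨x, Or.inr hx, hvx⟩
  | list A ihA =>
      intro σ v hv
      simp only [substMap, bndv, ftv] at hv ⊢
      exact ihA σ hv

/-- Composition of substitutions, under a non-capture side condition on binders. -/
lemma substMap_comp : ∀ (A : Ty) (σ τ : ℕ → Ty),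
    (∀ d ∈ bndv A, τ d = Ty.var d ∨ ∀ x, x ≠ d → d ∉ ftv (σ x)) →
    substMap τ (substMap σ A) = substMap (fun x => substMap τ (σ x)) A := by
  intro A
  induction A with
  | var x => intro σ τ h; rfl
  | base i => intro σ τ h; rfl
  | fn A B ihA ihB =>
      intro σ τ h
      simp only [substMap]
      rw [ihA σ τ fun d hd => h d (by simp only [bndv, Finset.mem_union]; exact Or.inl hd),
          ihB σ τ fun d hd => h d (by simp only [bndv, Finset.mem_union]; exact Or.inr hd)]
  | all d A ih =>
      intro σ τ h
      simp only [substMap]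
      congr 1
      rw [ih (Function.update σ d (Ty.var d)) (Function.update τ d (Ty.var d)) ?hbnd]
      case hbnd =>
        intro d' hd'
        by_cases hdd : d' = d
        · subst hdd; left; rw [Function.update_self]
        · rcases h d' (by simp only [bndv, Finset.mem_insert]; exact Or.inr hd') with h1 | h2
          · left; rw [Function.update_of_ne hdd, h1]
          · right; intro x hx
            by_cases hxd : x = d
            · subst hxd; rw [Function.update_self]
              simp only [ftv, Finset.mem_singleton]; exact hdd
            · rw [Function.update_of_ne hxd]; exact h2 x hx
      apply substMap_congr
      intro x hx
      by_cases hxd : x = d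
      · subst hxd
        rw [Function.update_self, Function.update_self]
        simp only [substMap, Function.update_self]
      · rw [Function.update_of_ne hxd, Function.update_of_ne hxd]
        apply substMap_congr
        intro y hy
        by_cases hyd : y = d
        · rcases h d (by simp [bndv]) with h1 | h2
          · rw [hyd, Function.update_self]; exact h1.symm
          · exact absurd (hyd ▸ hy) (h2 x hxd)
        · rw [Function.update_of_ne hyd]
  | prod A B ihA ihB =>
      intro σ τ h
      simp only [substMap]
      rw [ihA σ τ fun d hd => h d (by simp only [bndv, Finset.mem_union]; exact Or.inl hd),
          ihB σ τ fun d hd => h d (by simp only [bndv, Finset.mem_union]; exact Or.inr hd)]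
  | sum A B ihA ihB =>
      intro σ τ h
      simp only [substMap]
      rw [ihA σ τ fun d hd => h d (by simp only [bndv, Finset.mem_union]; exact Or.inl hd),
          ihB σ τ fun d hd => h d (by simp only [bndv, Finset.mem_union]; exact Or.inr hd)]
  | list A ihA =>
      intro σ τ h
      simp only [substMap]
      rw [ihA σ τ fun d hd => h d (by simpa [bndv] using hd)]

lemma mem_tyDom_mid (α : ℕ) (Γ1 : Ctx) : ∀ Γ2 : Ctx, α ∈ tyDom (Γ2 ++ Binding.tyVar α :: Γ1) := by
  intro Γ2
  induction Γ2 with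
  | nil => simp [tyDom]
  | cons b t ih =>
      cases b with
      | tmVar x A => simpa [tyDom] using ih
      | tyVar a => simp only [List.cons_append, tyDom, Finset.mem_insert]; exact Or.inr ih

lemma tsize_pos : ∀ A : Ty, 0 < tsize A := by
  intro A; cases A <;> simp only [tsize] <;> omega

lemma ftv_rho_sub {Γ : Ctx} {ρ : ℕ → ℕ} {T : Ty} (h : ∀ y ∈ ftv T, ρ y ∈ tyDom Γ) :
    ftv (substMap (fun x => Ty.var (ρ x)) T) ⊆ tyDom Γ := by
  intro v hv
  rcases Finset.mem_biUnion.1 (ftv_substMap T _ hv) with ⟨y, hy, hvy⟩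
  simp only [ftv, Finset.mem_singleton] at hvy
  exact hvy ▸ h y hy

lemma main_lemma (β α : ℕ) :
    ∀ n, ∀ A : Ty, tsize A ≤ n → ∀ (Γ : Ctx) (ρ : ℕ → ℕ) (σ1 σ2 : ℕ → Ty),
      WfCtx Γ → α ∈ tyDom Γ →
      (∀ x, ρ x = x ∨ (ρ x ∈ tyDom Γ ∧ ρ x ≠ α ∧ ρ x ∉ bndv A)) →
      (∀ x ∈ ftv A,
        (∀ y ∈ ftv (σ1 x), ρ y ∈ tyDom Γ) ∧ (∀ y ∈ ftv (σ2 x), ρ y ∈ tyDom Γ) ∧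
        (σ1 x = σ2 x ∨ (x = β ∧ σ2 x = Ty.all α (σ1 x)))) →
      (negOnly β A → TySub Γ (substMap (fun x => Ty.var (ρ x)) (substMap σ1 A))
          (substMap (fun x => Ty.var (ρ x)) (substMap σ2 A))) ∧
      (posOnly β A → TySub Γ (substMap (fun x => Ty.var (ρ x)) (substMap σ2 A))
          (substMap (fun x => Ty.var (ρ x)) (substMap σ1 A))) := by
  intro n
  induction n with
  | zero => intro A h; exact absurd h (by have := tsize_pos A; omega)
  | succ n ih =>
    intro A hsz Γ ρ σ1 σ2 hwf hα hR hG
    have hρα : ∀ x, x ≠ α → ρ x ≠ α := by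
      intro x hx
      rcases hR x with h | h
      · rw [h]; exact hx
      · exact h.2.1
    cases A with
    | base i =>
        constructor <;> intro _ <;>
          exact TySub.refl hwf (by simp [substMap, ftv])
    | var x =>
        obtain ⟨h1, h2, hd⟩ := hG x (by simp [ftv])
        constructor
        · intro hneg
          have hx : x ≠ β := by simpa [negOnly] using hneg
          rcases hd with he | ⟨hxb, _⟩
          · simp only [substMap]; rw [he]
            exact TySub.refl hwf (ftv_rho_sub h2)
          · exact absurd hxb hx
        · intro _
          rcases hd with he | ⟨hxb, hinv⟩
          · simp only [substMap]; rw [he]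
            exact TySub.refl hwf (ftv_rho_sub h2)
          · simp only [substMap]; rw [hinv]
            have e1 : substMap (fun z => Ty.var (ρ z)) (Ty.all α (σ1 x))
                = Ty.all α (substMap (fun z => Ty.var (Function.update ρ α α z)) (σ1 x)) := by
              simp only [substMap]; congr 1
              apply substMap_congr
              intro y _
              by_cases hyα : y = α
              · subst hyα; simp
              · simp [Function.update_of_ne hyα]
            have e3 : subst1 (substMap (fun z => Ty.var (Function.update ρ α α z)) (σ1 x)) α
                (Ty.var (ρ α)) = substMap (fun z => Ty.var (ρ z)) (σ1 x) := by
              show substMap (Function.update Ty.var α (Ty.var (ρ α))) _ = _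
              rw [substMap_comp (σ1 x) _ _ ?hbnd]
              · apply substMap_congr
                intro z _
                show Function.update Ty.var α (Ty.var (ρ α)) (Function.update ρ α α z)
                    = Ty.var (ρ z)
                by_cases hzα : z = α
                · rw [hzα, Function.update_self, Function.update_self]
                · rw [Function.update_of_ne hzα, Function.update_of_ne (hρα z hzα)]
              case hbnd =>
                intro d _
                by_cases hdα : d = α
                · subst hdα
                  right; intro z hz
                  simp only [ftv, Finset.mem_singleton]
                  rw [Function.update_of_ne hz]
                  exact fun h => (hρα z hz) h.symm
                · left; rw [Function.update_of_ne hdα]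
            have hBft : ftv (Ty.var (ρ α)) ⊆ tyDom Γ := by
              intro v hv
              simp only [ftv, Finset.mem_singleton] at hv
              subst hv
              rcases hR α with h | h
              · rw [h]; exact hα
              · exact h.1
            rw [e1, ← e3]
            exact TySub.inst hwf hBft
    | fn A1 A2 =>
        have hs1 : tsize A1 ≤ n := by have := tsize_pos A2; simp only [tsize] at hsz; omega
        have hs2 : tsize A2 ≤ n := by have := tsize_pos A1; simp only [tsize] at hsz; omega
        have hR1 : ∀ x, ρ x = x ∨ (ρ x ∈ tyDom Γ ∧ ρ x ≠ α ∧ ρ x ∉ bndv A1) := fun x =>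
          (hR x).imp id fun h => ⟨h.1, h.2.1, fun hc => h.2.2 (by
            simp only [bndv, Finset.mem_union]; exact Or.inl hc)⟩
        have hR2 : ∀ x, ρ x = x ∨ (ρ x ∈ tyDom Γ ∧ ρ x ≠ α ∧ ρ x ∉ bndv A2) := fun x =>
          (hR x).imp id fun h => ⟨h.1, h.2.1, fun hc => h.2.2 (by
            simp only [bndv, Finset.mem_union]; exact Or.inr hc)⟩
        have hG1 := fun x hx => hG x (by simp only [ftv, Finset.mem_union]; exact Or.inl hx)
        have hG2 := fun x hx => hG x (by simp only [ftv, Finset.mem_union]; exact Or.inr hx)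
        have IH1 := ih A1 hs1 Γ ρ σ1 σ2 hwf hα hR1 hG1
        have IH2 := ih A2 hs2 Γ ρ σ1 σ2 hwf hα hR2 hG2
        constructor
        · intro hpol
          have hp : posOnly β A1 ∧ negOnly β A2 := by simpa [negOnly] using hpol
          exact TySub.fn (IH1.2 hp.1) (IH2.1 hp.2)
        · intro hpol
          have hp : negOnly β A1 ∧ posOnly β A2 := by simpa [posOnly] using hpol
          exact TySub.fn (IH1.1 hp.1) (IH2.2 hp.2)
    | prod A1 A2 =>
        have hs1 : tsize A1 ≤ n := by have := tsize_pos A2; simp only [tsize] at hsz; omega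
        have hs2 : tsize A2 ≤ n := by have := tsize_pos A1; simp only [tsize] at hsz; omega
        have hR1 : ∀ x, ρ x = x ∨ (ρ x ∈ tyDom Γ ∧ ρ x ≠ α ∧ ρ x ∉ bndv A1) := fun x =>
          (hR x).imp id fun h => ⟨h.1, h.2.1, fun hc => h.2.2 (by
            simp only [bndv, Finset.mem_union]; exact Or.inl hc)⟩
        have hR2 : ∀ x, ρ x = x ∨ (ρ x ∈ tyDom Γ ∧ ρ x ≠ α ∧ ρ x ∉ bndv A2) := fun x =>
          (hR x).imp id fun h => ⟨h.1, h.2.1, fun hc => h.2.2 (by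
            simp only [bndv, Finset.mem_union]; exact Or.inr hc)⟩
        have hG1 := fun x hx => hG x (by simp only [ftv, Finset.mem_union]; exact Or.inl hx)
        have hG2 := fun x hx => hG x (by simp only [ftv, Finset.mem_union]; exact Or.inr hx)
        have IH1 := ih A1 hs1 Γ ρ σ1 σ2 hwf hα hR1 hG1
        have IH2 := ih A2 hs2 Γ ρ σ1 σ2 hwf hα hR2 hG2
        constructor
        · intro hpol
          have hp : negOnly β A1 ∧ negOnly β A2 := by simpa [negOnly] using hpol
          exact TySub.prod (IH1.1 hp.1) (IH2.1 hp.2)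
        · intro hpol
          have hp : posOnly β A1 ∧ posOnly β A2 := by simpa [posOnly] using hpol
          exact TySub.prod (IH1.2 hp.1) (IH2.2 hp.2)
    | sum A1 A2 =>
        have hs1 : tsize A1 ≤ n := by have := tsize_pos A2; simp only [tsize] at hsz; omega
        have hs2 : tsize A2 ≤ n := by have := tsize_pos A1; simp only [tsize] at hsz; omega
        have hR1 : ∀ x, ρ x = x ∨ (ρ x ∈ tyDom Γ ∧ ρ x ≠ α ∧ ρ x ∉ bndv A1) := fun x =>
          (hR x).imp id fun h => ⟨h.1, h.2.1, fun hc => h.2.2 (by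
            simp only [bndv, Finset.mem_union]; exact Or.inl hc)⟩
        have hR2 : ∀ x, ρ x = x ∨ (ρ x ∈ tyDom Γ ∧ ρ x ≠ α ∧ ρ x ∉ bndv A2) := fun x =>
          (hR x).imp id fun h => ⟨h.1, h.2.1, fun hc => h.2.2 (by
            simp only [bndv, Finset.mem_union]; exact Or.inr hc)⟩
        have hG1 := fun x hx => hG x (by simp only [ftv, Finset.mem_union]; exact Or.inl hx)
        have hG2 := fun x hx => hG x (by simp only [ftv, Finset.mem_union]; exact Or.inr hx)
        have IH1 := ih A1 hs1 Γ ρ σ1 σ2 hwf hα hR1 hG1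
        have IH2 := ih A2 hs2 Γ ρ σ1 σ2 hwf hα hR2 hG2
        constructor
        · intro hpol
          have hp : negOnly β A1 ∧ negOnly β A2 := by simpa [negOnly] using hpol
          exact TySub.sum (IH1.1 hp.1) (IH2.1 hp.2)
        · intro hpol
          have hp : posOnly β A1 ∧ posOnly β A2 := by simpa [posOnly] using hpol
          exact TySub.sum (IH1.2 hp.1) (IH2.2 hp.2)
    | list A1 =>
        have hs1 : tsize A1 ≤ n := by simp only [tsize] at hsz; omega
        have hR1 : ∀ x, ρ x = x ∨ (ρ x ∈ tyDom Γ ∧ ρ x ≠ α ∧ ρ x ∉ bndv A1) := fun x =>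
          (hR x).imp id fun h => ⟨h.1, h.2.1, fun hc => h.2.2 (by simpa [bndv] using hc)⟩
        have hG1 := fun x hx => hG x (by simpa [ftv] using hx)
        have IH1 := ih A1 hs1 Γ ρ σ1 σ2 hwf hα hR1 hG1
        constructor
        · intro hpol
          have hp : negOnly β A1 := by simpa [negOnly] using hpol
          exact TySub.list (IH1.1 hp)
        · intro hpol
          have hp : posOnly β A1 := by simpa [posOnly] using hpol
          exact TySub.list (IH1.2 hp)
    | all a A0 =>
        have hs0 : tsize A0 ≤ n := by simp only [tsize] at hsz; omega
        have hrupA : ∀ σ : ℕ → Ty,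
            substMap (fun x => Ty.var (ρ x)) (substMap σ (Ty.all a A0))
            = Ty.all a (substMap (fun x => Ty.var (Function.update ρ a a x))
                (substMap (Function.update σ a (Ty.var a)) A0)) := by
          intro σ
          simp only [substMap]
          congr 1
          apply substMap_congr
          intro y _
          by_cases hy : y = a
          · rw [hy, Function.update_self, Function.update_self]
          · rw [Function.update_of_ne hy, Function.update_of_ne hy]
        rw [hrupA σ1, hrupA σ2]
        have hmem : ∀ x ∈ ftv A0, x ≠ a → x ∈ ftv (Ty.all a A0) := by
          intro x hx hxa
          simp only [ftv, Finset.mem_sdiff, Finset.mem_singleton]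
          exact ⟨hx, hxa⟩
        have hy1 : ∀ x ∈ ftv A0, x ≠ a → ∀ y ∈ ftv (σ1 x), ρ y ∈ tyDom Γ :=
          fun x hx hxa => (hG x (hmem x hx hxa)).1
        have himg : ∀ σ : ℕ → Ty, (∀ x ∈ ftv A0, x ≠ a → ∀ y ∈ ftv (σ x), ρ y ∈ tyDom Γ) →
            ∀ v ∈ ftv (substMap (fun z => Ty.var (Function.update ρ a a z))
              (substMap (Function.update σ a (Ty.var a)) A0)), v = a ∨ v ∈ tyDom Γ := by
          intro σ hσ v hv
          rcases Finset.mem_biUnion.1 (ftv_substMap _ _ hv) with ⟨y, hyZ, hvy⟩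
          simp only [ftv, Finset.mem_singleton] at hvy
          subst hvy
          by_cases hya : y = a
          · left; rw [hya, Function.update_self]
          · rw [Function.update_of_ne hya]
            rcases Finset.mem_biUnion.1 (ftv_substMap _ _ hyZ) with ⟨x, hx0, hyx⟩
            by_cases hxa : x = a
            · rw [hxa, Function.update_self] at hyx
              simp only [ftv, Finset.mem_singleton] at hyx
              exact absurd hyx hya
            · rw [Function.update_of_ne hxa] at hyx
              exact Or.inr (hσ x hx0 hxa y hyx)
        by_cases hab : a = β
        · have hZ : substMap (Function.update σ1 a (Ty.var a)) A0
              = substMap (Function.update σ2 a (Ty.var a)) A0 := by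
            apply substMap_congr
            intro x hx
            by_cases hxa : x = a
            · rw [hxa, Function.update_self, Function.update_self]
            · rw [Function.update_of_ne hxa, Function.update_of_ne hxa]
              rcases (hG x (hmem x hx hxa)).2.2 with he | ⟨hxb, _⟩
              · exact he
              · exact absurd (hxb.trans hab.symm) hxa
          rw [← hZ]
          have hrefl : TySub Γ
              (Ty.all a (substMap (fun x => Ty.var (Function.update ρ a a x))
                (substMap (Function.update σ1 a (Ty.var a)) A0)))
              (Ty.all a (substMap (fun x => Ty.var (Function.update ρ a a x))
                (substMap (Function.update σ1 a (Ty.var a)) A0))) := by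
            apply TySub.refl hwf
            intro v hv
            simp only [ftv, Finset.mem_sdiff, Finset.mem_singleton] at hv
            rcases himg σ1 hy1 v hv.1 with h | h
            · exact absurd h hv.2
            · exact h
          exact ⟨fun _ => hrefl, fun _ => hrefl⟩
        · have hpolN : negOnly β (Ty.all a A0) → negOnly β A0 := by
            intro h
            rcases (by simpa [negOnly] using h : a = β ∨ negOnly β A0) with h1 | h2
            · exact absurd h1 hab
            · exact h2
          have hpolP : posOnly β (Ty.all a A0) → posOnly β A0 := by
            intro h
            rcases (by simpa [posOnly] using h : a = β ∨ posOnly β A0) with h1 | h2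
            · exact absurd h1 hab
            · exact h2
          have hρa : ∀ x, x ≠ a → ρ x ≠ a := by
            intro x hx
            rcases hR x with h | h
            · rw [h]; exact hx
            · intro h'
              exact h.2.2 (by rw [h']; simp [bndv])
          by_cases ha : a ∈ tyDom Γ
          · -- trick mode: a is already bound in the context, go through a fresh c
            obtain ⟨c, hc⟩ := Infinite.exists_notMem_finset
              ((((tyDom Γ ∪ {α, a}) ∪ ftv A0) ∪ bndv A0) ∪
                (ftv A0).biUnion (fun x => ((ftv (σ1 x) ∪ bndv (σ1 x)) ∪ ftv (σ2 x)) ∪ bndv (σ2 x)))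
            have hcΓ : c ∉ tyDom Γ := fun h => hc (by
              simp only [Finset.mem_union]; exact Or.inl (Or.inl (Or.inl (Or.inl h))))
            have hcα : c ≠ α := fun h => hc (by
              simp only [Finset.mem_union, Finset.mem_insert, Finset.mem_singleton]
              exact Or.inl (Or.inl (Or.inl (Or.inr (Or.inl h)))))
            have hca : c ≠ a := fun h => hc (by
              simp only [Finset.mem_union, Finset.mem_insert, Finset.mem_singleton]
              exact Or.inl (Or.inl (Or.inl (Or.inr (Or.inr h)))))
            have hcf0 : c ∉ ftv A0 := fun h => hc (by
              simp only [Finset.mem_union]; exact Or.inl (Or.inl (Or.inr h)))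
            have hcb0 : c ∉ bndv A0 := fun h => hc (by
              simp only [Finset.mem_union]; exact Or.inl (Or.inr h))
            have hcσ : ∀ x ∈ ftv A0,
                ((c ∉ ftv (σ1 x) ∧ c ∉ bndv (σ1 x)) ∧ c ∉ ftv (σ2 x)) ∧ c ∉ bndv (σ2 x) := by
              intro x hx
              have : ¬ (c ∈ ((ftv (σ1 x) ∪ bndv (σ1 x)) ∪ ftv (σ2 x)) ∪ bndv (σ2 x)) := by
                intro h
                exact hc (Finset.mem_union.2 (Or.inr (Finset.mem_biUnion.2 ⟨x, hx, h⟩)))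
              simp only [Finset.mem_union, not_or] at this
              exact ⟨⟨⟨this.1.1.1, this.1.1.2⟩, this.1.2⟩, this.2⟩
            set ρ2 : ℕ → ℕ :=
              fun x => if Function.update ρ a a x = a then c else Function.update ρ a a x
              with hρ2def
            have hρ2eq : ∀ y, (Function.update ρ a a y = a → ρ2 y = c) ∧
                (Function.update ρ a a y ≠ a → ρ2 y = Function.update ρ a a y) := by
              intro y
              constructor <;> intro h <;> simp only [hρ2def] <;>
                first
                  | exact if_pos h
                  | exact if_neg h
            have wf' : WfCtx (Binding.tyVar c :: Γ) := WfCtx.ty hwf hcΓ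
            have hρ2a : ∀ y, ρ2 y ≠ a := by
              intro y
              by_cases h : Function.update ρ a a y = a
              · rw [(hρ2eq y).1 h]; exact hca
              · rw [(hρ2eq y).2 h]; exact h
            have EQ1 : ∀ Z : Ty,
                substMap (Function.update Ty.var a (Ty.var c))
                  (substMap (fun x => Ty.var (Function.update ρ a a x)) Z)
                = substMap (fun x => Ty.var (ρ2 x)) Z := by
              intro Z
              rw [substMap_comp Z _ _ ?hside]
              case hside =>
                intro d _
                by_cases hda : d = a
                · right
                  intro x hx
                  simp only [ftv, Finset.mem_singleton]
                  rw [hda]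
                  intro h'
                  by_cases hxa : x = a
                  · rw [hxa, Function.update_self] at h'
                    exact (hda ▸ hx) hxa
                  · rw [Function.update_of_ne hxa] at h'
                    exact hρa x hxa h'.symm
                · left; rw [Function.update_of_ne hda]
              · apply substMap_congr
                intro x _
                show Function.update Ty.var a (Ty.var c) (Function.update ρ a a x)
                    = Ty.var (ρ2 x)
                by_cases h : Function.update ρ a a x = a
                · rw [h, Function.update_self, (hρ2eq x).1 h]
                · rw [Function.update_of_ne h, (hρ2eq x).2 h]
            have EQ2 : ∀ Z : Ty, c ∉ ftv Z → c ∉ bndv Z →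
                substMap (Function.update Ty.var c (Ty.var a))
                  (substMap (fun x => Ty.var (ρ2 x)) Z)
                = substMap (fun x => Ty.var (Function.update ρ a a x)) Z := by
              intro Z hf hb
              rw [substMap_comp Z _ _ ?hside2]
              case hside2 =>
                intro d hd
                left
                exact Function.update_of_ne (fun h => hb (by rw [← h]; exact hd)) _ _
              · apply substMap_congr
                intro x hx
                show Function.update Ty.var c (Ty.var a) (ρ2 x)
                    = Ty.var (Function.update ρ a a x)
                by_cases h : Function.update ρ a a x = a
                · rw [(hρ2eq x).1 h, Function.update_self, h]
                · rw [(hρ2eq x).2 h]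
                  have hne : Function.update ρ a a x ≠ c := by
                    by_cases hxa : x = a
                    · rw [hxa, Function.update_self]; exact Ne.symm hca
                    · rw [Function.update_of_ne hxa]
                      rcases hR x with h' | h'
                      · rw [h']; intro he; exact hf (he ▸ hx)
                      · intro he; exact hcΓ (he ▸ h'.1)
                  rw [Function.update_of_ne hne]
            have hgc : ∀ Z : Ty, c ∉ ftv Z →
                c ∉ ftv (Ty.all a (substMap (fun x => Ty.var (Function.update ρ a a x)) Z)) := by
              intro Z h1 h
              simp only [ftv, Finset.mem_sdiff, Finset.mem_singleton] at h
              rcases Finset.mem_biUnion.1 (ftv_substMap _ _ h.1) with ⟨y, hy, hvy⟩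
              simp only [ftv, Finset.mem_singleton] at hvy
              by_cases hya : y = a
              · rw [hya, Function.update_self] at hvy; exact hca hvy
              · rw [Function.update_of_ne hya] at hvy
                rcases hR y with h' | h'
                · rw [h'] at hvy; exact h1 (by rw [hvy]; exact hy)
                · exact hcΓ (by rw [hvy]; exact h'.1)
            have hga : ∀ Z : Ty, a ∉ ftv (substMap (fun x => Ty.var (ρ2 x)) Z) := by
              intro Z h
              rcases Finset.mem_biUnion.1 (ftv_substMap _ _ h) with ⟨y, hy, hvy⟩
              simp only [ftv, Finset.mem_singleton] at hvy
              exact hρ2a y hvy.symm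
            have tchain : ∀ Z Z' : Ty, c ∉ ftv Z → c ∉ ftv Z' → c ∉ bndv Z' →
                TySub (Binding.tyVar c :: Γ) (substMap (fun x => Ty.var (ρ2 x)) Z)
                  (substMap (fun x => Ty.var (ρ2 x)) Z') →
                TySub Γ (Ty.all a (substMap (fun x => Ty.var (Function.update ρ a a x)) Z))
                  (Ty.all a (substMap (fun x => Ty.var (Function.update ρ a a x)) Z')) := by
              intro Z Z' hfZ hfZ' hbZ' hmid
              have i1 : TySub (Binding.tyVar c :: Γ)
                  (Ty.all a (substMap (fun x => Ty.var (Function.update ρ a a x)) Z))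
                  (substMap (fun x => Ty.var (ρ2 x)) Z) := by
                have hinst := TySub.inst (Γ := Binding.tyVar c :: Γ) (a := a)
                  (A := substMap (fun x => Ty.var (Function.update ρ a a x)) Z)
                  (B := Ty.var c) wf' (by
                    intro v hv
                    simp only [ftv, Finset.mem_singleton] at hv
                    rw [hv]
                    simp only [tyDom]
                    exact Finset.mem_insert_self _ _)
                rwa [show subst1 (substMap (fun x => Ty.var (Function.update ρ a a x)) Z) a
                    (Ty.var c) = substMap (fun x => Ty.var (ρ2 x)) Z from EQ1 Z] at hinst
              have i3 : TySub (Binding.tyVar c :: Γ) (substMap (fun x => Ty.var (ρ2 x)) Z')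
                  (Ty.all a (substMap (fun x => Ty.var (ρ2 x)) Z')) := TySub.gen (hga Z')
              have inner := TySub.trans (TySub.trans i1 hmid) i3
              have t1 : TySub Γ
                  (Ty.all a (substMap (fun x => Ty.var (Function.update ρ a a x)) Z))
                  (Ty.all c (Ty.all a (substMap (fun x => Ty.var (Function.update ρ a a x)) Z))) :=
                TySub.gen (hgc Z hfZ)
              have t2 := TySub.poly inner
              have e2 : subst1 (Ty.all a (substMap (fun x => Ty.var (ρ2 x)) Z')) c (Ty.var a)
                  = Ty.all a (substMap (fun x => Ty.var (Function.update ρ a a x)) Z') := by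
                show substMap (Function.update Ty.var c (Ty.var a)) _ = _
                simp only [substMap]
                congr 1
                rw [show Function.update (Function.update Ty.var c (Ty.var a)) a (Ty.var a)
                    = Function.update Ty.var c (Ty.var a) from ?_]
                · exact EQ2 Z' hfZ' hbZ'
                · funext x
                  by_cases hxa : x = a
                  · rw [hxa, Function.update_self, Function.update_of_ne (Ne.symm hca)]
                  · rw [Function.update_of_ne hxa]
              have t3 : TySub Γ
                  (Ty.all c (Ty.all a (substMap (fun x => Ty.var (ρ2 x)) Z')))
                  (Ty.all a (substMap (fun x => Ty.var (Function.update ρ a a x)) Z')) := by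
                have hinst := TySub.inst (Γ := Γ) (a := c)
                  (A := Ty.all a (substMap (fun x => Ty.var (ρ2 x)) Z')) (B := Ty.var a) hwf
                  (by
                    intro v hv
                    simp only [ftv, Finset.mem_singleton] at hv
                    rw [hv]; exact ha)
                rwa [e2] at hinst
              exact TySub.trans (TySub.trans t1 t2) t3
            have hα'' : α ∈ tyDom (Binding.tyVar c :: Γ) := by
              simp only [tyDom]; exact Finset.mem_insert_of_mem hα
            have hR2 : ∀ x, ρ2 x = x ∨
                (ρ2 x ∈ tyDom (Binding.tyVar c :: Γ) ∧ ρ2 x ≠ α ∧ ρ2 x ∉ bndv A0) := by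
              intro x
              by_cases h : Function.update ρ a a x = a
              · right
                rw [(hρ2eq x).1 h]
                exact ⟨by simp only [tyDom]; exact Finset.mem_insert_self _ _, hcα, hcb0⟩
              · rw [(hρ2eq x).2 h]
                by_cases hxa : x = a
                · exact absurd (by rw [hxa, Function.update_self] : Function.update ρ a a x = a) h
                · rw [Function.update_of_ne hxa]
                  rcases hR x with h' | h'
                  · exact Or.inl h'
                  · exact Or.inr ⟨by simp only [tyDom]; exact Finset.mem_insert_of_mem h'.1, h'.2.1,
                      fun hcb => h'.2.2 (by simp only [bndv, Finset.mem_insert]; exact Or.inr hcb)⟩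
            have hmemtc : ∀ y, ρ y ∈ tyDom Γ → ρ2 y ∈ tyDom (Binding.tyVar c :: Γ) := by
              intro y hy
              by_cases h : Function.update ρ a a y = a
              · rw [(hρ2eq y).1 h]
                simp only [tyDom]; exact Finset.mem_insert_self _ _
              · rw [(hρ2eq y).2 h]
                by_cases hya : y = a
                · exact absurd (by rw [hya, Function.update_self] : Function.update ρ a a y = a) h
                · rw [Function.update_of_ne hya]
                  simp only [tyDom]; exact Finset.mem_insert_of_mem hy
            have hG2 : ∀ x ∈ ftv A0,
                (∀ y ∈ ftv (Function.update σ1 a (Ty.var a) x),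
                  ρ2 y ∈ tyDom (Binding.tyVar c :: Γ)) ∧
                (∀ y ∈ ftv (Function.update σ2 a (Ty.var a) x),
                  ρ2 y ∈ tyDom (Binding.tyVar c :: Γ)) ∧
                (Function.update σ1 a (Ty.var a) x = Function.update σ2 a (Ty.var a) x ∨
                  (x = β ∧ Function.update σ2 a (Ty.var a) x
                    = Ty.all α (Function.update σ1 a (Ty.var a) x))) := by
              intro x hx
              by_cases hxa : x = a
              · rw [hxa, Function.update_self, Function.update_self]
                refine ⟨?_, ?_, Or.inl rfl⟩ <;>
                · intro y hy
                  simp only [ftv, Finset.mem_singleton] at hy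
                  rw [hy, (hρ2eq a).1 (by rw [Function.update_self])]
                  simp only [tyDom]; exact Finset.mem_insert_self _ _
              · rw [Function.update_of_ne hxa, Function.update_of_ne hxa]
                obtain ⟨g1, g2, gd⟩ := hG x (hmem x hx hxa)
                exact ⟨fun y hy => hmemtc y (g1 y hy), fun y hy => hmemtc y (g2 y hy), gd⟩
            have IH := ih A0 hs0 (Binding.tyVar c :: Γ) ρ2 (Function.update σ1 a (Ty.var a))
              (Function.update σ2 a (Ty.var a)) wf' hα'' hR2 hG2
            have hfZ1 : c ∉ ftv (substMap (Function.update σ1 a (Ty.var a)) A0) := by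
              intro h
              rcases Finset.mem_biUnion.1 (ftv_substMap _ _ h) with ⟨x, hx, hcx⟩
              by_cases hxa : x = a
              · rw [hxa, Function.update_self] at hcx
                simp only [ftv, Finset.mem_singleton] at hcx
                exact hca hcx
              · rw [Function.update_of_ne hxa] at hcx
                exact (hcσ x hx).1.1.1 hcx
            have hfZ2 : c ∉ ftv (substMap (Function.update σ2 a (Ty.var a)) A0) := by
              intro h
              rcases Finset.mem_biUnion.1 (ftv_substMap _ _ h) with ⟨x, hx, hcx⟩
              by_cases hxa : x = a
              · rw [hxa, Function.update_self] at hcx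
                simp only [ftv, Finset.mem_singleton] at hcx
                exact hca hcx
              · rw [Function.update_of_ne hxa] at hcx
                exact (hcσ x hx).1.2 hcx
            have hbZ1 : c ∉ bndv (substMap (Function.update σ1 a (Ty.var a)) A0) := by
              intro h
              rcases Finset.mem_union.1 (bndv_substMap _ _ h) with h | h
              · exact hcb0 h
              · rcases Finset.mem_biUnion.1 h with ⟨x, hx, hcx⟩
                by_cases hxa : x = a
                · rw [hxa, Function.update_self] at hcx
                  simp [bndv] at hcx
                · rw [Function.update_of_ne hxa] at hcx
                  exact (hcσ x hx).1.1.2 hcx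
            have hbZ2 : c ∉ bndv (substMap (Function.update σ2 a (Ty.var a)) A0) := by
              intro h
              rcases Finset.mem_union.1 (bndv_substMap _ _ h) with h | h
              · exact hcb0 h
              · rcases Finset.mem_biUnion.1 h with ⟨x, hx, hcx⟩
                by_cases hxa : x = a
                · rw [hxa, Function.update_self] at hcx
                  simp [bndv] at hcx
                · rw [Function.update_of_ne hxa] at hcx
                  exact (hcσ x hx).2 hcx
            exact ⟨fun hpol => tchain _ _ hfZ1 hfZ2 hbZ2 (IH.1 (hpolN hpol)),
                   fun hpol => tchain _ _ hfZ2 hfZ1 hbZ1 (IH.2 (hpolP hpol))⟩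
          · -- direct mode: a is fresh for the context
            have hwf' : WfCtx (Binding.tyVar a :: Γ) := WfCtx.ty hwf ha
            have hα' : α ∈ tyDom (Binding.tyVar a :: Γ) := by
              simp only [tyDom]; exact Finset.mem_insert_of_mem hα
            have hR' : ∀ x, Function.update ρ a a x = x ∨
                (Function.update ρ a a x ∈ tyDom (Binding.tyVar a :: Γ) ∧
                 Function.update ρ a a x ≠ α ∧ Function.update ρ a a x ∉ bndv A0) := by
              intro x
              by_cases hxa : x = a
              · left; rw [hxa, Function.update_self]
              · rw [Function.update_of_ne hxa]
                rcases hR x with h | h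
                · exact Or.inl h
                · exact Or.inr ⟨by simp only [tyDom]; exact Finset.mem_insert_of_mem h.1, h.2.1,
                    fun hcb => h.2.2 (by simp only [bndv, Finset.mem_insert]; exact Or.inr hcb)⟩
            have hG' : ∀ x ∈ ftv A0,
                (∀ y ∈ ftv (Function.update σ1 a (Ty.var a) x),
                  Function.update ρ a a y ∈ tyDom (Binding.tyVar a :: Γ)) ∧
                (∀ y ∈ ftv (Function.update σ2 a (Ty.var a) x),
                  Function.update ρ a a y ∈ tyDom (Binding.tyVar a :: Γ)) ∧
                (Function.update σ1 a (Ty.var a) x = Function.update σ2 a (Ty.var a) x ∨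
                  (x = β ∧ Function.update σ2 a (Ty.var a) x
                    = Ty.all α (Function.update σ1 a (Ty.var a) x))) := by
              intro x hx
              have hup : ∀ y, ρ y ∈ tyDom Γ →
                  Function.update ρ a a y ∈ tyDom (Binding.tyVar a :: Γ) := by
                intro y hy
                by_cases hya : y = a
                · rw [hya, Function.update_self]
                  simp only [tyDom]; exact Finset.mem_insert_self _ _
                · rw [Function.update_of_ne hya]
                  simp only [tyDom]; exact Finset.mem_insert_of_mem hy
              by_cases hxa : x = a
              · rw [hxa, Function.update_self, Function.update_self]
                refine ⟨?_, ?_, Or.inl rfl⟩ <;>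
                · intro y hy
                  simp only [ftv, Finset.mem_singleton] at hy
                  rw [hy, Function.update_self]
                  simp only [tyDom]; exact Finset.mem_insert_self _ _
              · rw [Function.update_of_ne hxa, Function.update_of_ne hxa]
                obtain ⟨g1, g2, gd⟩ := hG x (hmem x hx hxa)
                exact ⟨fun y hy => hup y (g1 y hy), fun y hy => hup y (g2 y hy), gd⟩
            have IH := ih A0 hs0 (Binding.tyVar a :: Γ) (Function.update ρ a a)
              (Function.update σ1 a (Ty.var a)) (Function.update σ2 a (Ty.var a))
              hwf' hα' hR' hG'
            exact ⟨fun hpol => TySub.poly (IH.1 (hpolN hpol)),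
                   fun hpol => TySub.poly (IH.2 (hpolP hpol))⟩


/-- **Quantifier-removal lemma** for type containment: assume `α ∉ ftv A` and
all types mentioned are well formed under `Γ1, α, Γ2`.
(1) If every occurrence of `β` in `A` is negative, then
`Γ1,α,Γ2 ⊢ A[B/β] ⊑ A[(∀α.B)/β]`.
(2) If every occurrence of `β` in `A` is positive, then
`Γ1,α,Γ2 ⊢ A[(∀α.B)/β] ⊑ A[B/β]`. -/
theorem subtyping_forall_remove
    (Γ1 Γ2 : Ctx) (α β : ℕ) (A B : Ty)
    (hwf : WfCtx (Γ2 ++ Binding.tyVar α :: Γ1))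
    (hA : ftv A ⊆ insert β (tyDom (Γ2 ++ Binding.tyVar α :: Γ1)))
    (hB : ftv B ⊆ tyDom (Γ2 ++ Binding.tyVar α :: Γ1))
    (hα : α ∉ ftv A) :
    (negOnly β A →
        TySub (Γ2 ++ Binding.tyVar α :: Γ1) (subst1 A β B)
          (subst1 A β (Ty.all α B))) ∧
    (posOnly β A →
        TySub (Γ2 ++ Binding.tyVar α :: Γ1) (subst1 A β (Ty.all α B))
          (subst1 A β B)) := by
  have hmid : α ∈ tyDom (Γ2 ++ Binding.tyVar α :: Γ1) := mem_tyDom_mid α Γ1 Γ2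
  have hR : ∀ x : ℕ, id x = x ∨ (id x ∈ tyDom (Γ2 ++ Binding.tyVar α :: Γ1) ∧ id x ≠ α ∧
      id x ∉ bndv A) := fun x => Or.inl rfl
  have hG : ∀ x ∈ ftv A,
      (∀ y ∈ ftv (Function.update Ty.var β B x),
        id y ∈ tyDom (Γ2 ++ Binding.tyVar α :: Γ1)) ∧
      (∀ y ∈ ftv (Function.update Ty.var β (Ty.all α B) x),
        id y ∈ tyDom (Γ2 ++ Binding.tyVar α :: Γ1)) ∧
      (Function.update Ty.var β B x = Function.update Ty.var β (Ty.all α B) x ∨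
        (x = β ∧ Function.update Ty.var β (Ty.all α B) x
          = Ty.all α (Function.update Ty.var β B x))) := by
    intro x hx
    by_cases hxb : x = β
    · subst hxb
      rw [Function.update_self, Function.update_self]
      refine ⟨fun y hy => hB hy, ?_, Or.inr ⟨rfl, rfl⟩⟩
      intro y hy
      simp only [ftv, Finset.mem_sdiff, Finset.mem_singleton] at hy
      exact hB hy.1
    · rw [Function.update_of_ne hxb, Function.update_of_ne hxb]
      refine ⟨?_, ?_, Or.inl rfl⟩ <;>
      · intro y hy
        simp only [ftv, Finset.mem_singleton] at hy
        rw [hy]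
        rcases Finset.mem_insert.1 (hA hx) with h | h
        · exact absurd h hxb
        · exact h
  have H := main_lemma β α (tsize A) A le_rfl (Γ2 ++ Binding.tyVar α :: Γ1) id
    (Function.update Ty.var β B) (Function.update Ty.var β (Ty.all α B)) hwf hmid hR hG
  have e : ∀ T : Ty, substMap (fun x => Ty.var (id x)) T = T := fun T => substMap_id T
  constructor
  · intro h
    have h1 := H.1 h
    rwa [e, e] at h1
  · intro h
    have h2 := H.2 h
    rwa [e, e] at h2


end SigRes
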